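/- arXiv:0801.2239 — 3 statements merged into one kernel-verified Lean document; each statement's English description precedes it below -/
import Mathlib

section
/- Suppose n ∈ M satisfies: (a) m₊ - n is a ℤ_{≥0}-linear combination of the monomials A_{i,k} (i ∈ {1,2,3}, k ∈ ℤ), and (b) n - m₄ is a nonzero ℤ_{≥0}-linear combination of the monomials A_{2,k} (k ∈ ℤ). Then n = m₄ + A_{2,2} (which equals m₅) or n = m₄ + 2·A_{2,2}. -/
/-!
Type C₃ monomial setting for the Frenkel–Mukhin algorithm counterexample
(Nakai–Nakanishi).  `M` is the free abelian group on `(Fin 3) × ℤ`, written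
additively; the generator `Y i k` stands for the variable `Y_{i+1, q^k}`.
(The index `i : Fin 3` with value `0, 1, 2` corresponds to the node
`1, 2, 3` of the Dynkin diagram of type C₃.)
-/

noncomputable section
open scoped Classical

namespace FMC3

/-- The free abelian group on `(Fin 3) × ℤ` (written additively): the group
of Laurent monomials in the variables `Y_{i,q^k}`. -/
abbrev M : Type := (Fin 3 × ℤ) →₀ ℤ

/-- The generator `Y_{i+1, q^k}`. -/
def Y (i : Fin 3) (k : ℤ) : M := Finsupp.single (i, k) 1

/-- The root monomial `A_{1,k}` of type C₃. -/
def A1 (k : ℤ) : M := Y 0 (k - 1) + Y 0 (k + 1) - Y 1 k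

/-- The root monomial `A_{2,k}` of type C₃. -/
def A2 (k : ℤ) : M := Y 1 (k - 1) + Y 1 (k + 1) - Y 0 k - Y 2 k

/-- The root monomial `A_{3,k}` of type C₃. -/
def A3 (k : ℤ) : M := Y 2 (k - 2) + Y 2 (k + 2) - Y 1 (k - 1) - Y 1 (k + 1)

/-- The root monomials, indexed by `Fin 3`. -/
def A : Fin 3 → ℤ → M := ![A1, A2, A3]

/-- `d i = d_{i+1}`: the numbers `d₁ = d₂ = 1`, `d₃ = 2`. -/
def d : Fin 3 → ℤ := ![1, 1, 2]

/-- The highest weight monomial `m₊ = Y_{1,q⁴} Y_{2,q} Y_{3,q⁻²}`. -/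
def mp : M := Y 0 4 + Y 1 1 + Y 2 (-2)

/-- `m₁ = m₊ - A_{3,0}`. -/
def m1 : M := mp - A 2 0

/-- `m₂ = m₊ - A_{3,0} - A_{2,2}`. -/
def m2 : M := mp - A 2 0 - A 1 2

/-- `m₃ = m₊ - A_{3,0} - 2·A_{2,2}`. -/
def m3 : M := mp - A 2 0 - (2 : ℤ) • A 1 2

/-- `m₄ = m₊ - A_{3,0} - 2·A_{2,2} - A_{1,3}`. -/
def m4 : M := mp - A 2 0 - (2 : ℤ) • A 1 2 - A 0 3

/-- `m₅ = m₊ - A_{3,0} - A_{2,2} - A_{1,3}`. -/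
def m5 : M := mp - A 2 0 - A 1 2 - A 0 3

/-- `m₆ = m₊ - A_{2,2}`. -/
def m6 : M := mp - A 1 2

/-- A monomial is dominant if all its exponents are nonnegative. -/
def Dominant (m : M) : Prop := ∀ p : Fin 3 × ℤ, 0 ≤ m p

/-- A monomial is `i`-dominant if all its `(i,k)`-exponents are nonnegative. -/
def IDominant (i : Fin 3) (m : M) : Prop := ∀ k : ℤ, 0 ≤ m (i, k)

/-- The `i`-projection of a monomial: the function `k ↦ (i,k)`-exponent. -/
def proj (i : Fin 3) (m : M) : ℤ → ℤ := fun k => m (i, k)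

/-- The `i`-q-string `Σ^i_{a,r} = {a + d_i (r + 1 - 2 j) : j = 1, …, r}`. -/
def stringFinset (i : Fin 3) (a : ℤ) (r : ℕ) : Finset ℤ :=
  (Finset.Icc 1 r).image fun j => a + d i * ((r : ℤ) + 1 - 2 * (j : ℤ))

/-- A finite set of integers is an `i`-q-string if it is of the form
`Σ^i_{a,r}` for some `a` and some `r ≥ 1`. -/
def IsString (i : Fin 3) (S : Finset ℤ) : Prop :=
  ∃ (a : ℤ) (r : ℕ), 1 ≤ r ∧ S = stringFinset i a r

/-- Two `i`-q-strings (given by their data `(a, r)`) are in general position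
if their union is not an `i`-q-string, or one is contained in the other. -/
def GenPos (i : Fin 3) (p q : ℤ × ℕ) : Prop :=
  ¬ IsString i (stringFinset i p.1 p.2 ∪ stringFinset i q.1 q.2) ∨
    stringFinset i p.1 p.2 ⊆ stringFinset i q.1 q.2 ∨
    stringFinset i q.1 q.2 ⊆ stringFinset i p.1 p.2

/-- The indicator function of the `i`-q-string `Σ^i_{a,r}`. -/
def stringInd (i : Fin 3) (a : ℤ) (r : ℕ) (k : ℤ) : ℤ :=
  if k ∈ stringFinset i a r then 1 else 0

/-- `L` (a list of data `(a,r)` of `i`-q-strings, a list standing for a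
multiset) is a string factorization of the `i`-dominant monomial `m`: all
strings have length `≥ 1`, they are pairwise in general position, and their
indicator functions sum to the `i`-projection of `m`. -/
def IsFactorization (i : Fin 3) (m : M) (L : List (ℤ × ℕ)) : Prop :=
  (∀ p ∈ L, 1 ≤ p.2) ∧ L.Pairwise (GenPos i) ∧
    ∀ k : ℤ, proj i m k = (L.map fun p => stringInd i p.1 p.2 k).sum

/-- The list, indexed by `p = 0, …, r`, of the sums
`Σ_{j=1}^{p} A_{i, a + d_i (r - 2 j + 2)}` attached to the `i`-q-string
`Σ^i_{a,r}`. -/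
def strOpts (i : Fin 3) (a : ℤ) (r : ℕ) : List M :=
  (List.range (r + 1)).map fun p =>
    ∑ j ∈ Finset.range p, A i (a + d i * ((r : ℤ) - 2 * (j : ℤ)))

/-- All sums of one choice from `strOpts` for each string in the list `L`. -/
def combos (i : Fin 3) : List (ℤ × ℕ) → Multiset M
  | [] => {0}
  | p :: L => (↑(strOpts i p.1 p.2) : Multiset M).bind fun x =>
      (combos i L).map fun y => x + y

/-- `μ` is the `i`-expansion multiset `μ_i(m)` of the `i`-dominant monomial
`m`: for some string factorization `L` of `m`, `μ` consists of the elements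
`m - Σ_t Σ_{j=1}^{p_t} A_{i, a_t + d_i (r_t - 2 j + 2)}`, one for each choice
of integers `0 ≤ p_t ≤ r_t`. -/
def IsExpansion (i : Fin 3) (m : M) (μ : Multiset M) : Prop :=
  ∃ L : List (ℤ × ℕ), IsFactorization i m L ∧
    μ = (combos i L).map fun x => m - x

end FMC3

namespace FMC3


/-! ### Auxiliary lemmas: linear independence of the root monomials -/

private lemma ev0 (i : Fin 3) (k N : ℤ) (h : k ≤ N) :
    A i k ((0 : Fin 3), N + 1) = if (i, k) = ((0 : Fin 3), N) then 1 else 0 := by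
  fin_cases i <;>
    simp [A, A1, A2, A3, Y, Finsupp.single_apply, Prod.ext_iff, Fin.ext_iff] <;>
    first | (split_ifs <;> omega) | omega

private lemma ev2 (i : Fin 3) (k N : ℤ) (h : k ≤ N) :
    A i k ((2 : Fin 3), N + 2) = if (i, k) = ((2 : Fin 3), N) then 1 else 0 := by
  fin_cases i <;>
    simp [A, A1, A2, A3, Y, Finsupp.single_apply, Prod.ext_iff, Fin.ext_iff] <;>
    first | (split_ifs <;> omega) | omega

private lemma ev1 (i : Fin 3) (k N : ℤ) (h : k ≤ N) :
    A i k ((1 : Fin 3), N + 1) = (if (i, k) = ((1 : Fin 3), N) then 1 else 0)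
      - (if (i, k) = ((2 : Fin 3), N) then 1 else 0) := by
  fin_cases i <;>
    simp [A, A1, A2, A3, Y, Finsupp.single_apply, Prod.ext_iff, Fin.ext_iff] <;>
    first | (split_ifs <;> omega) | omega

/-- The root monomials `A_{i,k}` are linearly independent over `ℤ`. -/
private lemma indepA (D : (Fin 3 × ℤ) →₀ ℤ)
    (h : (D.sum fun p v => v • A p.1 p.2) = 0) : D = 0 := by
  by_contra hD
  obtain ⟨p₀, hp₀⟩ := Finsupp.support_nonempty_iff.mpr hD
  set s : Finset ℤ := D.support.image Prod.snd with hs_def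
  have hs : s.Nonempty := ⟨p₀.2, Finset.mem_image_of_mem _ hp₀⟩
  set N := s.max' hs with hN_def
  have hk : ∀ p ∈ D.support, p.2 ≤ N :=
    fun p hp => Finset.le_max' _ _ (Finset.mem_image_of_mem _ hp)
  have hq : ∀ q : Fin 3 × ℤ, (∑ p ∈ D.support, D p * A p.1 p.2 q) = 0 := by
    intro q
    have h' := DFunLike.congr_fun h q
    simpa [Finsupp.sum_apply, Finsupp.sum, Finsupp.smul_apply] using h'
  have h0N : D ((0 : Fin 3), N) = 0 := by
    have := hq ((0 : Fin 3), N + 1)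
    rw [Finset.sum_congr rfl fun p hp => by
        rw [ev0 p.1 p.2 N (hk p hp), mul_ite, mul_one, mul_zero]] at this
    rw [Finset.sum_ite_eq' D.support (((0 : Fin 3), N)) D] at this
    by_cases hmem : ((0 : Fin 3), N) ∈ D.support
    · simpa [hmem] using this
    · exact Finsupp.notMem_support_iff.mp hmem
  have h2N : D ((2 : Fin 3), N) = 0 := by
    have := hq ((2 : Fin 3), N + 2)
    rw [Finset.sum_congr rfl fun p hp => by
        rw [ev2 p.1 p.2 N (hk p hp), mul_ite, mul_one, mul_zero]] at this
    rw [Finset.sum_ite_eq' D.support (((2 : Fin 3), N)) D] at this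
    by_cases hmem : ((2 : Fin 3), N) ∈ D.support
    · simpa [hmem] using this
    · exact Finsupp.notMem_support_iff.mp hmem
  have h1N : D ((1 : Fin 3), N) = 0 := by
    have := hq ((1 : Fin 3), N + 1)
    rw [Finset.sum_congr rfl fun p hp => by
        rw [ev1 p.1 p.2 N (hk p hp), mul_sub, mul_ite, mul_one, mul_zero,
          mul_ite, mul_one, mul_zero]] at this
    rw [Finset.sum_sub_distrib, Finset.sum_ite_eq' D.support (((1 : Fin 3), N)) D,
      Finset.sum_ite_eq' D.support (((2 : Fin 3), N)) D] at this
    by_cases hmem : ((1 : Fin 3), N) ∈ D.support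
    · simpa [hmem, h2N] using this
    · exact Finsupp.notMem_support_iff.mp hmem
  obtain ⟨p, hp, hpN⟩ := Finset.mem_image.mp (s.max'_mem hs)
  have hDp := Finsupp.mem_support_iff.mp hp
  obtain ⟨i, k⟩ := p
  simp only at hpN
  subst hpN
  fin_cases i
  · exact hDp h0N
  · exact hDp h1N
  · exact hDp h2N

/-- The embedding `k ↦ (2, k)` (node 2 is Lean index `1`). -/
private def e1 : ℤ ↪ Fin 3 × ℤ :=
  ⟨fun k => ((1 : Fin 3), k), fun _ _ h => congrArg Prod.snd h⟩

private lemma lc_mapRange (c : (Fin 3 × ℤ) →₀ ℕ) :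
    Finsupp.linearCombination ℤ (fun p : Fin 3 × ℤ => A p.1 p.2)
        (c.mapRange (fun v : ℕ => (v : ℤ)) rfl)
      = c.sum fun p v => (v : ℤ) • A p.1 p.2 := by
  rw [Finsupp.linearCombination_apply]
  exact Finsupp.sum_mapRange_index fun p => zero_smul ℤ _

private lemma lc_embDomain (b : ℤ →₀ ℕ) :
    Finsupp.linearCombination ℤ (fun p : Fin 3 × ℤ => A p.1 p.2)
        ((b.mapRange (fun v : ℕ => (v : ℤ)) rfl).embDomain e1)
      = b.sum fun k v => (v : ℤ) • A 1 k := by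
  rw [Finsupp.linearCombination_apply, Finsupp.sum_embDomain]
  exact Finsupp.sum_mapRange_index fun p => zero_smul ℤ _

private lemma lc_singles :
    Finsupp.linearCombination ℤ (fun p : Fin 3 × ℤ => A p.1 p.2)
        (Finsupp.single ((2 : Fin 3), 0) 1 + Finsupp.single ((1 : Fin 3), 2) 2
          + Finsupp.single ((0 : Fin 3), 3) 1)
      = A 2 0 + (2 : ℤ) • A 1 2 + A 0 3 := by
  rw [map_add, map_add, Finsupp.linearCombination_single,
    Finsupp.linearCombination_single, Finsupp.linearCombination_single,
    one_smul, one_smul]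

private lemma happ (c : (Fin 3 × ℤ) →₀ ℕ) (b : ℤ →₀ ℕ) (k : ℤ)
    (hD0 : (c.mapRange (fun v : ℕ => (v : ℤ)) rfl
        + (b.mapRange (fun v : ℕ => (v : ℤ)) rfl).embDomain e1
        - (Finsupp.single ((2 : Fin 3), 0) 1 + Finsupp.single ((1 : Fin 3), 2) 2
          + Finsupp.single ((0 : Fin 3), 3) 1)) = 0) :
    (c ((1 : Fin 3), k) : ℤ) + (b k : ℤ) = if k = 2 then 2 else 0 := by
  have h := DFunLike.congr_fun hD0 ((1 : Fin 3), k)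
  have hbzk : ((b.mapRange (fun v : ℕ => (v : ℤ)) rfl).embDomain e1) ((1 : Fin 3), k)
      = (b k : ℤ) := by
    have he : ((1 : Fin 3), k) = e1 k := rfl
    rw [he, Finsupp.embDomain_apply_self, Finsupp.mapRange_apply]
  rw [Finsupp.sub_apply, Finsupp.add_apply, Finsupp.mapRange_apply, hbzk,
    Finsupp.add_apply, Finsupp.add_apply, Finsupp.single_apply, Finsupp.single_apply,
    Finsupp.single_apply, Finsupp.coe_zero, Pi.zero_apply] at h
  rw [if_neg (show ¬((2 : Fin 3), (0 : ℤ)) = ((1 : Fin 3), k) by simp [Prod.ext_iff]),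
    if_neg (show ¬((0 : Fin 3), (3 : ℤ)) = ((1 : Fin 3), k) by simp [Prod.ext_iff])] at h
  by_cases hk : k = 2
  · subst hk; norm_num at h ⊢; omega
  · rw [if_neg (show ¬((1 : Fin 3), (2 : ℤ)) = ((1 : Fin 3), k) by
        simp only [Prod.mk.injEq, true_and]; omega)] at h
    rw [if_neg hk]; omega

/-- If `n ∈ M` is such that (a) `m₊ - n` is a
`ℤ≥0`-linear combination of the root monomials `A_{i,k}` and (b) `n - m₄` is
a nonzero `ℤ≥0`-linear combination of the root monomials `A_{2,k}`, then
`n = m₄ + A_{2,2}` (which equals `m₅`) or `n = m₄ + 2·A_{2,2}`. -/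
theorem ancestors_of_m4 (n : M)
    (ha : ∃ c : (Fin 3 × ℤ) →₀ ℕ, mp - n = c.sum fun p v => (v : ℤ) • A p.1 p.2)
    (hb : ∃ c : ℤ →₀ ℕ, c ≠ 0 ∧ n - m4 = c.sum fun k v => (v : ℤ) • A 1 k) :
    (n = m4 + A 1 2 ∨ n = m4 + (2 : ℤ) • A 1 2) ∧ m4 + A 1 2 = m5 := by
  obtain ⟨c, hc⟩ := ha
  obtain ⟨b, hb0, hbsum⟩ := hb
  have hm45 : m4 + A 1 2 = m5 := by
    simp only [m4, m5, two_smul]; abel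
  have hsum0 : ((c.mapRange (fun v : ℕ => (v : ℤ)) rfl
      + (b.mapRange (fun v : ℕ => (v : ℤ)) rfl).embDomain e1
      - (Finsupp.single ((2 : Fin 3), 0) 1 + Finsupp.single ((1 : Fin 3), 2) 2
        + Finsupp.single ((0 : Fin 3), 3) 1)).sum fun p v => v • A p.1 p.2) = 0 := by
    rw [← Finsupp.linearCombination_apply, map_sub, map_add, lc_mapRange, lc_embDomain,
      lc_singles, ← hc, ← hbsum]
    have hmm : mp - m4 = A 2 0 + (2 : ℤ) • A 1 2 + A 0 3 := by
      simp only [m4]; abel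
    rw [← hmm]; abel
  have hD0 := indepA _ hsum0
  have key : ∀ k : ℤ, (c ((1 : Fin 3), k) : ℤ) + (b k : ℤ) = if k = 2 then 2 else 0 :=
    fun k => happ c b k hD0
  have hbk0 : ∀ k : ℤ, k ≠ 2 → b k = 0 := by
    intro k hk
    have := key k
    rw [if_neg hk] at this
    omega
  have hb2 : b 2 = 1 ∨ b 2 = 2 := by
    have h2 := key 2
    rw [if_pos rfl] at h2
    have hb2ne : b 2 ≠ 0 := by
      intro h0
      apply hb0
      ext k
      by_cases hk : k = 2
      · rw [hk]; exact h0
      · exact hbk0 k hk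
    omega
  have hbsum2 : (b.sum fun k v => (v : ℤ) • A 1 k) = (b 2 : ℤ) • A 1 2 := by
    have hbsupp : b.support ⊆ {2} := by
      intro k hk
      rw [Finset.mem_singleton]
      by_contra hne
      exact Finsupp.mem_support_iff.mp hk (hbk0 k hne)
    rw [Finsupp.sum, Finset.sum_subset hbsupp
      (fun x _ hxn => by simp [Finsupp.notMem_support_iff.mp hxn]),
      Finset.sum_singleton]
  have hn : n = m4 + (b 2 : ℤ) • A 1 2 := by
    rw [hbsum2] at hbsum
    exact sub_eq_iff_eq_add'.mp hbsum
  refine ⟨?_, hm45⟩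
  rcases hb2 with h | h <;> rw [h] at hn
  · left; simpa using hn
  · right; simpa using hn

end FMC3
end
end

section
/- Let m₅' = m₄ + 2·A_{2,2}. Then m₅' is 2-dominant with 2-projection π₂(m₅') = 𝟙_{-1} + 2·𝟙_{1} + 𝟙_{3}, whose string factorization consists of the two 2-q-strings Σ²_{1,3} = {-1, 1, 3} and Σ²_{1,1} = {1} (which are in general position), and the monomial m₄ does NOT belong to the 2-expansion multiset μ₂(m₅'). -/
/-!
Type C₃ monomial setting for the Frenkel–Mukhin algorithm counterexample
(Nakai–Nakanishi).  `M` is the free abelian group on `(Fin 3) × ℤ`, written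
additively; the generator `Y i k` stands for the variable `Y_{i+1, q^k}`.
(The index `i : Fin 3` with value `0, 1, 2` corresponds to the node
`1, 2, 3` of the Dynkin diagram of type C₃.)
-/

noncomputable section
open scoped Classical

namespace FMC3

lemma d_one : d 1 = 1 := rfl

lemma A_one : A 1 = A2 := rfl

lemma A_coeff (m k : ℤ) : (A 1 m) ((0 : Fin 3), k) = if m = k then (-1 : ℤ) else 0 := by
  simp [A_one, A2, Y, Finsupp.single_apply, Prod.ext_iff]
  split_ifs <;> simp_all

lemma mem_string {a : ℤ} {r : ℕ} {k : ℤ} :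
    k ∈ stringFinset 1 a r ↔ ∃ j : ℕ, 1 ≤ j ∧ j ≤ r ∧ a + ((r : ℤ) + 1 - 2 * (j : ℤ)) = k := by
  simp only [stringFinset, Finset.pure_def, Finset.bind_def, Finset.sup_singleton_apply,
    Finset.mem_image, Finset.mem_Icc, exists_exists_and_eq_and, d_one, one_mul]
  constructor
  · rintro ⟨j, ⟨h1, h2⟩, rfl⟩; exact ⟨j, h1, h2, rfl⟩
  · rintro ⟨j, h1, h2, rfl⟩; exact ⟨j, ⟨h1, h2⟩, rfl⟩

lemma hs13 : stringFinset 1 1 3 = ({-1, 1, 3} : Finset ℤ) := by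
  ext k
  simp only [mem_string, Finset.mem_insert, Finset.mem_singleton]
  constructor
  · rintro ⟨j, h1, h2, rfl⟩; omega
  · rintro (rfl | rfl | rfl)
    exacts [⟨3, by omega, by omega, by omega⟩, ⟨2, by omega, by omega, by omega⟩,
      ⟨1, by omega, by omega, by omega⟩]

lemma hs11 : stringFinset 1 1 1 = ({1} : Finset ℤ) := by
  ext k
  simp only [mem_string, Finset.mem_singleton]
  constructor
  · rintro ⟨j, h1, h2, rfl⟩; omega
  · rintro rfl; exact ⟨1, by omega, by omega, by omega⟩

lemma hs31 : stringFinset 1 3 1 = ({3} : Finset ℤ) := by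
  ext k
  simp only [mem_string, Finset.mem_singleton]
  constructor
  · rintro ⟨j, h1, h2, rfl⟩; omega
  · rintro rfl; exact ⟨1, by omega, by omega, by omega⟩

lemma union_eq : stringFinset 1 1 1 ∪ stringFinset 1 3 1 = stringFinset 1 2 2 := by
  rw [hs11, hs31]
  ext k
  simp only [mem_string, Finset.mem_union, Finset.mem_singleton]
  constructor
  · rintro (rfl | rfl)
    exacts [⟨2, by omega, by omega, by omega⟩, ⟨1, by omega, by omega, by omega⟩]
  · rintro ⟨j, h1, h2, rfl⟩; omega

lemma m5'_eq : m4 + (2 : ℤ) • A 1 2 =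
    Y 1 (-1) + Y 1 1 + Y 1 1 + Y 1 3 - Y 0 2 - Y 2 2 := by
  show mp - A 2 0 - (2 : ℤ) • A 1 2 - A 0 3 + (2 : ℤ) • A 1 2 = _
  have h2 : A 2 0 = A3 0 := rfl
  have h0 : A 0 3 = A1 3 := rfl
  rw [h2, h0]
  unfold mp A1 A3
  norm_num
  abel

lemma proj_m5' : proj 1 (m4 + (2 : ℤ) • A 1 2) = fun k : ℤ =>
    (if k = -1 then 1 else 0) + 2 * (if k = 1 then 1 else 0) + (if k = 3 then 1 else 0) := by
  funext k
  show (m4 + (2 : ℤ) • A 1 2) ((1 : Fin 3), k) = _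
  rw [m5'_eq]
  simp [Y, Finsupp.single_apply, Prod.ext_iff]
  split_ifs <;> omega

lemma countP_split {α : Type*} (l : List α) (p q : α → Bool) :
    l.countP p = l.countP (fun a => p a && q a) + l.countP (fun a => p a && !q a) := by
  induction l with
  | nil => rfl
  | cons a l ih =>
    simp only [List.countP_cons, ih]
    cases hp : p a <;> cases hq : q a <;> simp <;> omega

lemma strOpts_coeff {a : ℤ} {r : ℕ} {u : M} (hu : u ∈ strOpts 1 a r) :
    (∀ k : ℤ, u ((0 : Fin 3), k) ≤ 0) ∧
    (u ((0 : Fin 3), 4) = 0 → -u ((0 : Fin 3), 2) ≤ if a + (r : ℤ) = 2 then 1 else 0) := by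
  simp only [strOpts, List.mem_map, List.mem_range] at hu
  obtain ⟨p, hp, rfl⟩ := hu
  have hcoeff : ∀ k : ℤ,
      (∑ j ∈ Finset.range p, A 1 (a + d 1 * ((r : ℤ) - 2 * (j : ℤ)))) ((0 : Fin 3), k)
        = ∑ j ∈ Finset.range p, (if a + ((r : ℤ) - 2 * (j : ℤ)) = k then (-1 : ℤ) else 0) := by
    intro k
    rw [Finsupp.finset_sum_apply]
    exact Finset.sum_congr rfl fun j _ => by rw [d_one, one_mul, A_coeff]
  have hle : ∀ k : ℤ,
      (∑ j ∈ Finset.range p, A 1 (a + d 1 * ((r : ℤ) - 2 * (j : ℤ)))) ((0 : Fin 3), k) ≤ 0 := by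
    intro k
    rw [hcoeff]
    apply Finset.sum_nonpos
    intro j _
    split <;> omega
  refine ⟨hle, fun h4 => ?_⟩
  rw [hcoeff] at h4
  have h4' : ∀ j : ℕ, j < p → ¬(a + ((r : ℤ) - 2 * (j : ℤ)) = 4) := by
    intro j hj
    have := Finset.sum_eq_zero_iff_of_nonpos (fun j _ => by split <;> omega) |>.mp h4 j
      (Finset.mem_range.mpr hj)
    intro hcontra
    rw [if_pos hcontra] at this
    omega
  rw [hcoeff]
  have key : ∀ j ∈ Finset.range p,
      -(if j = 0 then (if a + (r : ℤ) = 2 then (1 : ℤ) else 0) else 0)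
        ≤ (if a + ((r : ℤ) - 2 * (j : ℤ)) = 2 then (-1 : ℤ) else 0) := by
    intro j hj
    have hj' := Finset.mem_range.mp hj
    rcases Nat.eq_zero_or_pos j with rfl | hjpos
    · simp only [if_pos rfl]
      split_ifs <;> push_cast at * <;> omega
    · have hne : ¬(a + ((r : ℤ) - 2 * (j : ℤ)) = 2) := by
        intro hcontra
        exact h4' (j - 1) (by omega) (by omega)
      rw [if_neg hne, if_neg (by omega : ¬ j = 0)]
      omega
  have h1 : -(∑ j ∈ Finset.range p, (if a + ((r : ℤ) - 2 * (j : ℤ)) = 2 then (-1 : ℤ) else 0))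
      ≤ ∑ j ∈ Finset.range p, (if j = 0 then (if a + (r : ℤ) = 2 then (1 : ℤ) else 0) else 0) := by
    have h2 := Finset.sum_le_sum key
    have h3 : ∑ j ∈ Finset.range p,
        -(if j = 0 then (if a + (r : ℤ) = 2 then (1 : ℤ) else 0) else 0)
        = -∑ j ∈ Finset.range p,
          (if j = 0 then (if a + (r : ℤ) = 2 then (1 : ℤ) else 0) else 0) := by
      rw [Finset.sum_neg_distrib]
    rw [h3] at h2
    linarith
  refine h1.trans ?_
  rw [Finset.sum_ite_eq' (Finset.range p) 0
    (fun _ => (if a + (r : ℤ) = 2 then (1 : ℤ) else 0))]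
  split_ifs <;> omega

/-- Bool-valued membership predicate, fixed once so that `countP` atoms agree. -/
def memB (k : ℤ) (p : ℤ × ℕ) : Bool := decide (k ∈ stringFinset 1 p.1 p.2)

/-- Bool-valued predicate `a + r = 2`. -/
def sumB (p : ℤ × ℕ) : Bool := decide (p.1 + (p.2 : ℤ) = 2)

lemma memB_iff {k : ℤ} {p : ℤ × ℕ} : memB k p = true ↔ k ∈ stringFinset 1 p.1 p.2 := by
  simp [memB]

lemma sumB_iff {p : ℤ × ℕ} : sumB p = true ↔ p.1 + (p.2 : ℤ) = 2 := by
  simp [sumB]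

lemma sum_ind_eq_countP (L : List (ℤ × ℕ)) (k : ℤ) :
    (L.map fun p => stringInd 1 p.1 p.2 k).sum = ((L.countP (memB k) : ℕ) : ℤ) := by
  induction L with
  | nil => simp
  | cons q L ih =>
    rw [List.map_cons, List.sum_cons, List.countP_cons, ih]
    by_cases h : k ∈ stringFinset 1 q.1 q.2 <;>
      simp [stringInd, h, memB] <;> push_cast <;> omega

lemma combos_coeff (L : List (ℤ × ℕ)) : ∀ x ∈ combos 1 L,
    (∀ k : ℤ, x ((0 : Fin 3), k) ≤ 0) ∧
    (x ((0 : Fin 3), 4) = 0 → -x ((0 : Fin 3), 2) ≤ ((L.countP sumB : ℕ) : ℤ)) := by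
  induction L with
  | nil =>
    intro x hx
    simp only [combos, Multiset.mem_singleton] at hx
    subst hx
    simp
  | cons q L ih =>
    intro x hx
    simp only [combos, Multiset.mem_bind, Multiset.mem_map, Multiset.mem_coe] at hx
    obtain ⟨u, hu, y, hy, rfl⟩ := hx
    obtain ⟨hu1, hu2⟩ := strOpts_coeff hu
    obtain ⟨hy1, hy2⟩ := ih y hy
    have hadd : ∀ k : ℤ, (u + y) ((0 : Fin 3), k) = u ((0, k)) + y ((0, k)) := fun k =>
      Finsupp.add_apply u y _
    refine ⟨fun k => by rw [hadd]; exact add_nonpos (hu1 k) (hy1 k), fun h4 => ?_⟩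
    rw [hadd] at h4 ⊢
    have hu4 : u ((0 : Fin 3), 4) = 0 := le_antisymm (hu1 4) (by have := hy1 4; omega)
    have hy4 : y ((0 : Fin 3), 4) = 0 := by omega
    have b1 := hu2 hu4
    have b2 := hy2 hy4
    rw [List.countP_cons]
    by_cases hq : q.1 + (q.2 : ℤ) = 2
    · rw [if_pos hq] at b1
      rw [if_pos (show sumB q = true from sumB_iff.mpr hq)]
      push_cast
      omega
    · rw [if_neg hq] at b1
      rw [if_neg (show ¬sumB q = true from by simp [sumB, hq])]
      push_cast
      omega


set_option maxHeartbeats 2000000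

/-- Let `m₅' = m₄ + 2·A_{2,2}`.  Then `m₅'` is `2`-dominant
with `2`-projection `𝟙_{-1} + 2·𝟙_{1} + 𝟙_{3}`, whose string factorization
consists of the two `2`-q-strings `Σ²_{1,3} = {-1,1,3}` and `Σ²_{1,1} = {1}`
(which are in general position), and `m₄` does NOT belong to the
`2`-expansion multiset `μ₂(m₅')`. -/
theorem m4_not_in_expansion_of_m5' :
    IDominant 1 (m4 + (2 : ℤ) • A 1 2) ∧
    (proj 1 (m4 + (2 : ℤ) • A 1 2) = fun k : ℤ =>
      (if k = -1 then 1 else 0) + 2 * (if k = 1 then 1 else 0) +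
        (if k = 3 then 1 else 0)) ∧
    stringFinset 1 1 3 = ({-1, 1, 3} : Finset ℤ) ∧
    stringFinset 1 1 1 = ({1} : Finset ℤ) ∧
    GenPos 1 (1, 3) (1, 1) ∧
    IsFactorization 1 (m4 + (2 : ℤ) • A 1 2) [(1, 3), (1, 1)] ∧
    (∀ μ : Multiset M, IsExpansion 1 (m4 + (2 : ℤ) • A 1 2) μ → m4 ∉ μ) := by
  have hdom : IDominant 1 (m4 + (2 : ℤ) • A 1 2) := by
    intro k
    have h := congrFun proj_m5' k
    simp only [proj] at h
    rw [h]
    split_ifs <;> omega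
  have hgp : GenPos 1 (1, 3) (1, 1) := by
    refine Or.inr (Or.inr ?_)
    show stringFinset 1 1 1 ⊆ stringFinset 1 1 3
    rw [hs11, hs13]
    intro x hx
    simp only [Finset.mem_singleton] at hx
    simp [hx]
  have hfact : IsFactorization 1 (m4 + (2 : ℤ) • A 1 2) [(1, 3), (1, 1)] := by
    refine ⟨?_, ?_, ?_⟩
    · intro p hp
      simp only [List.mem_cons, List.mem_singleton, List.not_mem_nil, or_false] at hp
      rcases hp with rfl | rfl <;> norm_num
    · exact List.Pairwise.cons
        (fun q hq => by
          simp only [List.mem_singleton] at hq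
          subst hq; exact hgp)
        (List.pairwise_singleton _ _)
    · intro k
      rw [congrFun proj_m5' k]
      simp only [List.map_cons, List.map_nil, List.sum_cons, List.sum_nil, stringInd,
        hs13, hs11, Finset.mem_insert, Finset.mem_singleton]
      split_ifs <;> omega
  refine ⟨hdom, proj_m5', hs13, hs11, hgp, hfact, ?_⟩
  rintro μ ⟨L, ⟨hL1, hL2, hL3⟩, rfl⟩ hm
  rw [Multiset.mem_map] at hm
  obtain ⟨x, hx, hxm⟩ := hm
  have hx2 : x = (2 : ℤ) • A 1 2 := by
    have h : m4 + (2 : ℤ) • A 1 2 - x = m4 := hxm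
    rw [sub_eq_iff_eq_add] at h
    exact ((add_right_inj m4).mp h).symm
  have hxc2 : x ((0 : Fin 3), 2) = -2 := by
    rw [hx2, Finsupp.smul_apply, A_coeff]; norm_num
  have hxc4 : x ((0 : Fin 3), 4) = 0 := by
    rw [hx2, Finsupp.smul_apply, A_coeff]; norm_num
  obtain ⟨-, hcb⟩ := combos_coeff L x hx
  have hcount2 : 2 ≤ L.countP (sumB) := by
    have h := hcb hxc4
    rw [hxc2] at h
    omega
  have hcnt : ∀ k : ℤ, ((L.countP (memB k) : ℕ) : ℤ)
      = (if k = -1 then 1 else 0) + 2 * (if k = 1 then 1 else 0)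
        + (if k = 3 then 1 else 0) := by
    intro k
    rw [← sum_ind_eq_countP, ← hL3 k]
    exact congrFun proj_m5' k
  have cm3 : L.countP (memB (-3)) = 0 := by
    have h := hcnt (-3)
    rw [if_neg (by norm_num), if_neg (by norm_num), if_neg (by norm_num)] at h
    omega
  have cm1 : L.countP (memB (-1)) = 1 := by
    have h := hcnt (-1)
    rw [if_pos rfl, if_neg (by norm_num), if_neg (by norm_num)] at h
    omega
  have c1 : L.countP (memB 1) = 2 := by
    have h := hcnt 1
    rw [if_neg (by norm_num), if_pos rfl, if_neg (by norm_num)] at h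
    omega
  have c3 : L.countP (memB 3) = 1 := by
    have h := hcnt 3
    rw [if_neg (by norm_num), if_neg (by norm_num), if_pos rfl] at h
    omega
  have c5 : L.countP (memB 5) = 0 := by
    have h := hcnt 5
    rw [if_neg (by norm_num), if_neg (by norm_num), if_neg (by norm_num)] at h
    omega
  have hno3 : ∀ p ∈ L, (-3 : ℤ) ∉ stringFinset 1 p.1 p.2 := fun p hp hmem =>
    List.countP_eq_zero.mp cm3 p hp (memB_iff.mpr hmem)
  have hno5 : ∀ p ∈ L, (5 : ℤ) ∉ stringFinset 1 p.1 p.2 := fun p hp hmem =>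
    List.countP_eq_zero.mp c5 p hp (memB_iff.mpr hmem)
  have hQmem : ∀ p ∈ L, p.1 + (p.2 : ℤ) = 2 → (1 : ℤ) ∈ stringFinset 1 p.1 p.2 := by
    intro p hp hq
    exact mem_string.mpr ⟨1, le_refl 1, hL1 p hp, by push_cast; omega⟩
  have h11 : ((1 : ℤ), (1 : ℕ)) ∈ L := by
    by_contra hn
    have himp : ∀ p ∈ L, p.1 + (p.2 : ℤ) = 2 → (-1 : ℤ) ∈ stringFinset 1 p.1 p.2 := by
      intro p hp hq
      have hr1 := hL1 p hp
      have hr3 : ¬ 3 ≤ p.2 := by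
        intro h3
        exact hno3 p hp (mem_string.mpr ⟨3, by omega, h3, by push_cast; omega⟩)
      have hr2 : p.2 = 2 := by
        rcases (by omega : p.2 = 1 ∨ p.2 = 2) with h | h
        · exfalso
          apply hn
          have h1 : p.1 = 1 := by omega
          have : p = ((1 : ℤ), (1 : ℕ)) := Prod.ext h1 h
          rwa [← this]
        · exact h
      exact mem_string.mpr ⟨2, by omega, by omega, by push_cast; omega⟩
    have hle := List.countP_mono_left (l := L)
      (p := sumB)
      (q := memB (-1))
      (fun x hx h => memB_iff.mpr (himp x hx (sumB_iff.mp h)))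
    omega
  have hPQle := List.countP_mono_left (l := L)
    (p := sumB)
    (q := memB 1)
    (fun x hx h => memB_iff.mpr (hQmem x hx (sumB_iff.mp h)))
  have hsplit := countP_split L (memB 1) sumB
  have hcongr : L.countP (fun p => memB 1 p && sumB p) = L.countP sumB := by
    apply List.countP_congr
    intro p hp
    by_cases hq : p.1 + (p.2 : ℤ) = 2
    · simp [sumB_iff.mpr hq, memB_iff.mpr (hQmem p hp hq)]
    · simp [show sumB p = false by simpa [sumB] using hq]
  obtain ⟨q, hqL, hq3'⟩ := List.countP_pos_iff.mp
    (by omega : 0 < L.countP (memB 3))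
  have hq3 : (3 : ℤ) ∈ stringFinset 1 q.1 q.2 := memB_iff.mp hq3'
  obtain ⟨j, hj1, hjr, hjk⟩ := mem_string.mp hq3
  have hqnQ : ¬(q.1 + (q.2 : ℤ) = 2) := by intro h; omega
  have hq1 : (1 : ℤ) ∉ stringFinset 1 q.1 q.2 := by
    intro h1
    have hpos : 0 < L.countP (fun p => memB 1 p && !sumB p) :=
      List.countP_pos_iff.mpr ⟨q, hqL,
        by simp [memB_iff.mpr h1, show sumB q = false by simpa [sumB] using hqnQ]⟩
    omega
  have hqj2 : ¬ 2 ≤ j := by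
    intro h2
    exact hno5 q hqL (mem_string.mpr ⟨j - 1, by omega, by omega, by omega⟩)
  have hqr : q.2 = 1 := by
    by_contra h
    have h2 : 2 ≤ q.2 := by have := hL1 q hqL; omega
    exact hq1 (mem_string.mpr ⟨j + 1, by omega, by omega, by omega⟩)
  have hq31 : q = ((3 : ℤ), (1 : ℕ)) := by
    have h1 : q.1 = 3 := by omega
    exact Prod.ext h1 hqr
  have hsym : Symmetric (GenPos 1) := by
    intro p q h
    rcases h with h | h | h
    · exact Or.inl (by rwa [Finset.union_comm])
    · exact Or.inr (Or.inr h)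
    · exact Or.inr (Or.inl h)
  have hgen : GenPos 1 ((1 : ℤ), (1 : ℕ)) ((3 : ℤ), (1 : ℕ)) :=
    (haveI : Std.Symm (GenPos 1) := ⟨fun _ _ h => hsym h⟩
    hL2.forall h11 (hq31 ▸ hqL) (by decide))
  rcases hgen with h | h | h
  · exact h ⟨2, 2, by norm_num, union_eq⟩
  · have h' : stringFinset 1 1 1 ⊆ stringFinset 1 3 1 := h
    rw [hs11, hs31] at h'
    exact absurd (h' (Finset.mem_singleton_self 1)) (by decide)
  · have h' : stringFinset 1 3 1 ⊆ stringFinset 1 1 1 := h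
    rw [hs31, hs11] at h'
    exact absurd (h' (Finset.mem_singleton_self 3)) (by decide)

end FMC3
end
end

section
/- The monomial m₃ is 1-dominant with 1-projection π₁(m₃) = 2·𝟙_{2} + 𝟙_{4}, whose string factorization consists of the two 1-q-strings Σ¹_{3,2} = {2, 4} and Σ¹_{2,1} = {2} (in general position); consequently the 1-expansion multiset μ₁(m₃) is the six-element multiset {m₃, m₃ - A_{1,5}, m₃ - A_{1,3} - A_{1,5} (with multiplicity 2), m₃ - A_{1,3}, m₃ - 2·A_{1,3} - A_{1,5}}; in particular m₄ = m₃ - A_{1,3} belongs to μ₁(m₃). -/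
/-!
Type C₃ monomial setting for the Frenkel–Mukhin algorithm counterexample
(Nakai–Nakanishi).  `M` is the free abelian group on `(Fin 3) × ℤ`, written
additively; the generator `Y i k` stands for the variable `Y_{i+1, q^k}`.
(The index `i : Fin 3` with value `0, 1, 2` corresponds to the node
`1, 2, 3` of the Dynkin diagram of type C₃.)
-/

noncomputable section
open scoped Classical

namespace FMC3


lemma mem_sf {i : Fin 3} {a k : ℤ} {r : ℕ} : k ∈ stringFinset i a r ↔
    ∃ j : ℕ, 1 ≤ j ∧ j ≤ r ∧ k = a + d i * ((r : ℤ) + 1 - 2 * (j : ℤ)) := by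
  simp only [stringFinset]
  simp
  exact ⟨fun ⟨j, ⟨h1, h2⟩, h3⟩ => ⟨j, h1, h2, h3.symm⟩,
    fun ⟨j, h1, h2, h3⟩ => ⟨j, ⟨h1, h2⟩, h3.symm⟩⟩

lemma d0 : d 0 = 1 := rfl

lemma sf32 : stringFinset 0 3 2 = ({2, 4} : Finset ℤ) := by
  ext k
  rw [mem_sf]
  simp only [d0, Finset.mem_insert, Finset.mem_singleton]
  constructor
  · rintro ⟨j, h1, h2, rfl⟩; omega
  · rintro (rfl | rfl)
    · exact ⟨2, by norm_num⟩
    · exact ⟨1, by norm_num⟩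

lemma sf21 : stringFinset 0 2 1 = ({2} : Finset ℤ) := by
  ext k
  rw [mem_sf]
  simp only [d0, Finset.mem_singleton]
  constructor
  · rintro ⟨j, h1, h2, rfl⟩; omega
  · rintro rfl; exact ⟨1, by norm_num⟩

lemma sf41 : stringFinset 0 4 1 = ({4} : Finset ℤ) := by
  ext k
  rw [mem_sf]
  simp only [d0, Finset.mem_singleton]
  constructor
  · rintro ⟨j, h1, h2, rfl⟩; omega
  · rintro rfl; exact ⟨1, by norm_num⟩


lemma m3_apply0 (k : ℤ) : m3 (0, k) =
    2 * (if k = 2 then 1 else 0) + (if k = 4 then 1 else 0) := by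
  simp [m3, mp, A, A1, A2, A3, Y, Finsupp.single_apply, Prod.ext_iff]
  split_ifs <;> omega

lemma stringInd_nonneg (i : Fin 3) (a : ℤ) (r : ℕ) (k : ℤ) : 0 ≤ stringInd i a r k := by
  unfold stringInd; split_ifs <;> norm_num

set_option maxHeartbeats 1000000 in
lemma mem_class {L : List (ℤ × ℕ)} (hF : IsFactorization 0 m3 L) :
    ∀ p ∈ L, p = ((2 : ℤ), (1 : ℕ)) ∨ p = (4, 1) ∨ p = (3, 2) := by
  obtain ⟨hr, _, hsum⟩ := hF
  rintro ⟨a, r⟩ hp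
  have hr1 : 1 ≤ r := hr _ hp
  have key : ∀ k ∈ stringFinset 0 a r, k = 2 ∨ k = 4 := by
    intro k hk
    have h1 : stringInd 0 a r k ≤ (L.map fun p => stringInd 0 p.1 p.2 k).sum := by
      apply List.single_le_sum
      · intro x hx
        simp only [List.mem_map] at hx
        obtain ⟨q, _, rfl⟩ := hx
        exact stringInd_nonneg _ _ _ _
      · exact List.mem_map_of_mem hp
    rw [← hsum k] at h1
    have h2 : stringInd 0 a r k = 1 := by simp [stringInd, hk]
    have h3 := m3_apply0 k
    by_contra hc
    push_neg at hc
    rw [if_neg hc.1, if_neg hc.2] at h3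
    simp [proj, h3] at h1
    omega
  have hm1 : (a + ((r : ℤ) + 1 - 2 * 1)) = 2 ∨ (a + ((r : ℤ) + 1 - 2 * 1)) = 4 := by
    apply key
    rw [mem_sf]
    exact ⟨1, le_refl _, hr1, by rw [d0]; push_cast; ring⟩
  have hm2 : (a + ((r : ℤ) + 1 - 2 * (r : ℤ))) = 2 ∨ (a + ((r : ℤ) + 1 - 2 * (r : ℤ))) = 4 := by
    apply key
    rw [mem_sf]
    exact ⟨r, hr1, le_refl _, by rw [d0]; push_cast; ring⟩
  have : (a = 2 ∧ r = 1) ∨ (a = 4 ∧ r = 1) ∨ (a = 3 ∧ r = 2) := by omega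
  rcases this with ⟨rfl, rfl⟩ | ⟨rfl, rfl⟩ | ⟨rfl, rfl⟩ <;> simp


lemma genpos_symm {i : Fin 3} {p q : ℤ × ℕ} (h : GenPos i p q) : GenPos i q p := by
  unfold GenPos at h ⊢
  rw [Finset.union_comm]
  tauto

lemma not_genpos_21_41 : ¬ GenPos 0 (2, 1) (4, 1) := by
  unfold GenPos
  push_neg
  refine ⟨⟨3, 2, by norm_num, ?_⟩, ?_, ?_⟩
  · rw [sf32, sf21, sf41]; decide
  · rw [sf21, sf41]; decide
  · rw [sf21, sf41]; decide

lemma i21_2 : stringInd 0 2 1 2 = 1 := by simp [stringInd, sf21]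
lemma i21_4 : stringInd 0 2 1 4 = 0 := by simp [stringInd, sf21]
lemma i41_2 : stringInd 0 4 1 2 = 0 := by simp [stringInd, sf41]
lemma i41_4 : stringInd 0 4 1 4 = 1 := by simp [stringInd, sf41]
lemma i32_2 : stringInd 0 3 2 2 = 1 := by simp [stringInd, sf32]
lemma i32_4 : stringInd 0 3 2 4 = 1 := by simp [stringInd, sf32]

lemma len_le {L : List (ℤ × ℕ)}
    (h : ∀ p ∈ L, p = ((2 : ℤ), (1 : ℕ)) ∨ p = (4, 1) ∨ p = (3, 2)) :
    (L.length : ℤ) ≤ (L.map fun p => stringInd 0 p.1 p.2 2).sum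
      + (L.map fun p => stringInd 0 p.1 p.2 4).sum := by
  induction L with
  | nil => simp
  | cons q L ih =>
    have hq := h q (by simp)
    have ih' := ih fun p hp => h p (by simp [hp])
    rcases hq with rfl | rfl | rfl <;>
      simp only [List.map_cons, List.sum_cons, List.length_cons, i21_2, i21_4, i41_2,
        i41_4, i32_2, i32_4] <;> push_cast <;> omega

lemma fact_eq {L : List (ℤ × ℕ)} (hF : IsFactorization 0 m3 L) :
    L = [((3 : ℤ), (2 : ℕ)), (2, 1)] ∨ L = [((2 : ℤ), (1 : ℕ)), (3, 2)] := by
  have hcls := mem_class hF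
  obtain ⟨hr, hgp, hsum⟩ := hF
  have h2 : (L.map fun p => stringInd 0 p.1 p.2 2).sum = 2 := by
    rw [← hsum 2]; simp [proj, m3_apply0]
  have h4 : (L.map fun p => stringInd 0 p.1 p.2 4).sum = 1 := by
    rw [← hsum 4]; simp [proj, m3_apply0]
  have hlen : L.length ≤ 3 := by
    have := len_le hcls
    omega
  match L, hcls, hgp, h2, h4, hlen with
  | [], hcls, hgp, h2, h4, hlen => simp at h4
  | [p], hcls, hgp, h2, h4, hlen =>
    rcases hcls p (by simp) with rfl | rfl | rfl <;>
      simp [i21_2, i21_4, i41_2, i41_4, i32_2, i32_4] at h2 h4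
  | [p, q], hcls, hgp, h2, h4, hlen =>
    rcases hcls p (by simp) with rfl | rfl | rfl <;>
      rcases hcls q (by simp) with rfl | rfl | rfl <;>
      simp [i21_2, i21_4, i41_2, i41_4, i32_2, i32_4] at h2 h4 <;>
      first
        | (left; rfl)
        | (right; rfl)
  | [p, q, r], hcls, hgp, h2, h4, hlen =>
    rcases hcls p (by simp) with rfl | rfl | rfl <;>
      rcases hcls q (by simp) with rfl | rfl | rfl <;>
      rcases hcls r (by simp) with rfl | rfl | rfl <;>
      simp [i21_2, i21_4, i41_2, i41_4, i32_2, i32_4] at h2 h4 <;>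
      (exfalso
       exact not_genpos_21_41
         (@List.Pairwise.forall _ _ _ ⟨fun _ _ => genpos_symm⟩ hgp (2, 1)
           (by simp) (4, 1) (by simp) (by decide)))
  | p :: q :: r :: s :: T, hcls, hgp, h2, h4, hlen => simp at hlen; omega


lemma so32 : strOpts 0 3 2 = [0, A 0 5, A 0 5 + A 0 3] := by
  simp [strOpts, d0, List.range_succ, Finset.sum_range_succ]

lemma so21 : strOpts 0 2 1 = [0, A 0 3] := by
  simp [strOpts, d0, List.range_succ, Finset.sum_range_succ]


def target3 : Multiset M :=
  {m3, m3 - A 0 5, m3 - A 0 3 - A 0 5, m3 - A 0 3 - A 0 5,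
    m3 - A 0 3, m3 - (2 : ℤ) • A 0 3 - A 0 5}

lemma comb1 :
    (combos 0 [((3 : ℤ), (2 : ℕ)), (2, 1)]).map (fun x => m3 - x) = target3 := by
  have e1 : m3 - (A 0 5 + A 0 3) = m3 - A 0 3 - A 0 5 := by abel
  have e2 : m3 - (A 0 5 + A 0 3 + A 0 3) = m3 - (2 : ℤ) • A 0 3 - A 0 5 := by
    rw [two_smul]; abel
  simp only [combos, so32, so21, ← Multiset.cons_coe, Multiset.coe_nil,
    Multiset.cons_bind, Multiset.zero_bind, Multiset.map_cons, Multiset.map_zero,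
    Multiset.map_singleton, Multiset.singleton_bind, add_zero,
    zero_add, sub_zero, Multiset.singleton_add, Multiset.map_add, Multiset.map_map,
    Multiset.map_id', Function.comp, Multiset.cons_add]
  rw [e1, e2, target3]
  rw [Multiset.cons_swap (m3 - A 0 3) (m3 - A 0 5),
    Multiset.cons_swap (m3 - A 0 3) (m3 - A 0 3 - A 0 5),
    Multiset.cons_swap (m3 - A 0 3) (m3 - A 0 3 - A 0 5)]
  rfl

lemma comb2 :
    (combos 0 [((2 : ℤ), (1 : ℕ)), (3, 2)]).map (fun x => m3 - x) = target3 := by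
  have e1 : m3 - (A 0 5 + A 0 3) = m3 - A 0 3 - A 0 5 := by abel
  have e1' : m3 - (A 0 3 + A 0 5) = m3 - A 0 3 - A 0 5 := by abel
  have e2 : m3 - (A 0 3 + (A 0 5 + A 0 3)) = m3 - (2 : ℤ) • A 0 3 - A 0 5 := by
    rw [two_smul]; abel
  simp only [combos, so32, so21, ← Multiset.cons_coe, Multiset.coe_nil,
    Multiset.cons_bind, Multiset.zero_bind, Multiset.map_cons, Multiset.map_zero,
    Multiset.map_singleton, Multiset.singleton_bind, add_zero,
    zero_add, sub_zero, Multiset.singleton_add, Multiset.map_add, Multiset.map_map,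
    Multiset.map_id', Function.comp, Multiset.cons_add]
  rw [e1, e1', e2, target3]
  rw [Multiset.cons_swap (m3 - A 0 3) (m3 - A 0 3 - A 0 5)]
  rfl


lemma hfact : IsFactorization 0 m3 [((3 : ℤ), (2 : ℕ)), (2, 1)] := by
  refine ⟨?_, ?_, ?_⟩
  · intro p hp
    simp only [List.mem_cons, List.not_mem_nil, or_false] at hp
    rcases hp with rfl | rfl <;> norm_num
  · refine List.Pairwise.cons ?_ (List.Pairwise.cons ?_ List.Pairwise.nil)
    · intro q hq
      simp only [List.mem_singleton] at hq
      subst hq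
      exact Or.inr (Or.inr (by rw [sf32, sf21]; decide))
    · intro q hq
      simp at hq
  · intro k
    show m3 (0, k) = _
    rw [m3_apply0]
    simp only [List.map_cons, List.map_nil, List.sum_cons, List.sum_nil, stringInd,
      sf32, sf21, Finset.mem_insert, Finset.mem_singleton, add_zero]
    split_ifs <;> omega


/-- The monomial `m₃` is `1`-dominant with `1`-projection
`π₁(m₃) = 2·𝟙_{2} + 𝟙_{4}`, whose string factorization consists of the two
`1`-q-strings `Σ¹_{3,2} = {2,4}` and `Σ¹_{2,1} = {2}` (in general position);
consequently the `1`-expansion multiset `μ₁(m₃)` is the six-element multiset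
`{m₃, m₃ - A_{1,5}, m₃ - A_{1,3} - A_{1,5} (twice), m₃ - A_{1,3},
m₃ - 2·A_{1,3} - A_{1,5}}`; in particular `m₄ = m₃ - A_{1,3}` belongs to
`μ₁(m₃)`. -/
theorem expansion1_of_m3 :
    IDominant 0 m3 ∧
    (proj 0 m3 = fun k : ℤ =>
      2 * (if k = 2 then 1 else 0) + (if k = 4 then 1 else 0)) ∧
    stringFinset 0 3 2 = ({2, 4} : Finset ℤ) ∧
    stringFinset 0 2 1 = ({2} : Finset ℤ) ∧
    GenPos 0 (3, 2) (2, 1) ∧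
    IsFactorization 0 m3 [(3, 2), (2, 1)] ∧
    (∀ μ : Multiset M, IsExpansion 0 m3 μ ↔
      μ = ({m3, m3 - A 0 5, m3 - A 0 3 - A 0 5, m3 - A 0 3 - A 0 5,
            m3 - A 0 3, m3 - (2 : ℤ) • A 0 3 - A 0 5} : Multiset M)) ∧
    m4 = m3 - A 0 3 ∧
    m4 ∈ ({m3, m3 - A 0 5, m3 - A 0 3 - A 0 5, m3 - A 0 3 - A 0 5,
            m3 - A 0 3, m3 - (2 : ℤ) • A 0 3 - A 0 5} : Multiset M) := by
  refine ⟨?_, ?_, sf32, sf21, ?_, hfact, ?_, rfl, ?_⟩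
  · intro k
    rw [m3_apply0]
    split_ifs <;> norm_num
  · funext k
    exact m3_apply0 k
  · exact Or.inr (Or.inr (by rw [sf32, sf21]; decide))
  · intro μ
    constructor
    · rintro ⟨L, hF, rfl⟩
      rcases fact_eq hF with rfl | rfl
      · exact comb1
      · exact comb2
    · rintro rfl
      exact ⟨[(3, 2), (2, 1)], hfact, comb1.symm⟩
  · rw [show m4 = m3 - A 0 3 from rfl]
    simp

end FMC3
end
end
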